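/- Let I be a real interval with [−1,0] ⊆ I ⊆ ℝ₋ and let f : Iⁿ → ℝ be a nonconstant quasi-Lovász extension, f = L ∘ φ. Then the following are equivalent: (i) f_0 is weakly homogeneous; (ii) there exists A ⊆ [n] such that f_0(−1_A) ≠ 0; (iii) φ(−1) ≠ 0. In this case, f_0(x·1_A) = (φ(x)/φ(−1))·f_0(−1_A) for every x ∈ I and every A ⊆ [n]. -/

import Mathlib

open Finset

/-- The indicator tuple `1_A` of a subset `A ⊆ [n]`. -/
def ind {n : ℕ} (A : Finset (Fin n)) : Fin n → ℝ := fun i => if i ∈ A then 1 else 0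

/-- The Möbius transform of a pseudo-Boolean function (viewed as a set function). -/
def mobius {n : ℕ} (ψ : Finset (Fin n) → ℝ) (A : Finset (Fin n)) : ℝ :=
  ∑ B ∈ A.powerset, (-1 : ℝ) ^ (A.card - B.card) * ψ B

/-- `min_{i ∈ A} x i` (with value `0` for `A = ∅`). -/
def minOnFin {n : ℕ} (A : Finset (Fin n)) (x : Fin n → ℝ) : ℝ :=
  if h : A.Nonempty then A.inf' h x else 0

/-- The Lovász extension of a pseudo-Boolean function `ψ` (viewed as a set function):
`L_ψ(x) = a_ψ(∅) + Σ_{∅ ≠ A ⊆ [n]} a_ψ(A) · min_{i ∈ A} x_i`. -/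
def Lov {n : ℕ} (ψ : Finset (Fin n) → ℝ) (x : Fin n → ℝ) : ℝ :=
  mobius ψ ∅ + ∑ A : Finset (Fin n), mobius ψ A * minOnFin A x

/-- `x ∈ ℝⁿ_σ`, i.e. `x_{σ(1)} ≤ ⋯ ≤ x_{σ(n)}`. -/
def inRσ {n : ℕ} (σ : Equiv.Perm (Fin n)) (x : Fin n → ℝ) : Prop :=
  ∀ i j : Fin n, i ≤ j → x (σ i) ≤ x (σ j)

/-- `A_σ^↑(k) = {σ(j) : j ≥ k}` (0-indexed; `Aup σ n = ∅`). -/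
def Aup {n : ℕ} (σ : Equiv.Perm (Fin n)) (k : ℕ) : Finset (Fin n) :=
  (Finset.univ.filter fun j : Fin n => k ≤ (j : ℕ)).image σ

/-- `A_σ^↓(k) = {σ(j) : j < k}` (0-indexed; `Adown σ 0 = ∅`). -/
def Adown {n : ℕ} (σ : Equiv.Perm (Fin n)) (k : ℕ) : Finset (Fin n) :=
  (Finset.univ.filter fun j : Fin n => (j : ℕ) < k).image σ


noncomputable def Sfun {n : ℕ} (ψ : Finset (Fin n) → ℝ) (A : Finset (Fin n)) : ℝ :=
  ∑ B ∈ Finset.univ.filter (fun B : Finset (Fin n) => (B ∩ A).Nonempty), mobius ψ B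

noncomputable def Tfun {n : ℕ} (ψ : Finset (Fin n) → ℝ) (C : Finset (Fin n)) : ℝ :=
  ∑ B ∈ Finset.univ.filter (fun B : Finset (Fin n) => B.Nonempty ∧ B ⊆ C), mobius ψ B
lemma minOn_zero {n : ℕ} (B : Finset (Fin n)) : minOnFin B (fun _ => (0:ℝ)) = 0 := by
  unfold minOnFin
  split
  · simp
  · rfl

lemma minOn_scaled {n : ℕ} (B A : Finset (Fin n)) (c : ℝ) (hc : c ≤ 0) :
    minOnFin B (fun i => c * ind A i) = if (B ∩ A).Nonempty then c else 0 := by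
  unfold minOnFin
  rcases eq_or_ne B ∅ with rfl | hB
  · simp
  · have hBne : B.Nonempty := Finset.nonempty_iff_ne_empty.2 hB
    rw [dif_pos hBne]
    by_cases h : (B ∩ A).Nonempty
    · rw [if_pos h]
      obtain ⟨j, hj⟩ := h
      simp only [Finset.mem_inter] at hj
      apply le_antisymm
      · calc B.inf' hBne (fun i => c * ind A i) ≤ c * ind A j :=
              Finset.inf'_le _ hj.1
          _ = c := by simp [ind, hj.2]
      · apply Finset.le_inf'
        intro i _
        unfold ind
        split <;> simp [hc]
    · rw [if_neg h]
      have hall : ∀ i ∈ B, c * ind A i = 0 := by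
        intro i hi
        have : i ∉ A := fun hiA => h ⟨i, Finset.mem_inter.2 ⟨hi, hiA⟩⟩
        simp [ind, this]
      apply le_antisymm
      · obtain ⟨j, hj⟩ := id hBne
        calc B.inf' hBne (fun i => c * ind A i) ≤ c * ind A j := Finset.inf'_le _ hj
          _ = 0 := hall j hj
      · apply Finset.le_inf'
        intro i hi
        rw [hall i hi]

lemma Lov_zero {n : ℕ} (ψ : Finset (Fin n) → ℝ) :
    Lov ψ (fun _ => (0:ℝ)) = mobius ψ ∅ := by
  unfold Lov
  simp [minOn_zero]

lemma Lov_scaled {n : ℕ} (ψ : Finset (Fin n) → ℝ) (A : Finset (Fin n)) (c : ℝ) (hc : c ≤ 0) :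
    Lov ψ (fun i => c * ind A i) - Lov ψ (fun _ => (0:ℝ)) = c * Sfun ψ A := by
  have hsum : ∑ B : Finset (Fin n), mobius ψ B * minOnFin B (fun i => c * ind A i)
      = c * Sfun ψ A := by
    have h1 : ∀ B : Finset (Fin n),
        mobius ψ B * minOnFin B (fun i => c * ind A i)
          = if (B ∩ A).Nonempty then mobius ψ B * c else 0 := by
      intro B
      rw [minOn_scaled B A c hc]
      split <;> simp
    rw [Finset.sum_congr rfl (fun B _ => h1 B),
      ← Finset.sum_filter (fun B : Finset (Fin n) => (B ∩ A).Nonempty)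
        (fun B => mobius ψ B * c)]
    unfold Sfun
    rw [← Finset.sum_mul]
    ring
  rw [Lov_zero]
  unfold Lov
  rw [hsum]
  ring
lemma S_split {n : ℕ} (ψ : Finset (Fin n) → ℝ) (C : Finset (Fin n)) :
    Sfun ψ Finset.univ = Sfun ψ Cᶜ + Tfun ψ C := by
  unfold Sfun Tfun
  have h1 : Finset.univ.filter (fun B : Finset (Fin n) => (B ∩ Finset.univ).Nonempty)
      = Finset.univ.filter (fun B : Finset (Fin n) => B.Nonempty) := by
    apply Finset.filter_congr; intro B _; simp
  rw [h1, ← Finset.sum_filter_add_sum_filter_not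
    (Finset.univ.filter (fun B : Finset (Fin n) => B.Nonempty))
    (fun B => (B ∩ Cᶜ).Nonempty) (mobius ψ)]
  congr 1
  · congr 1
    rw [Finset.filter_filter]
    apply Finset.filter_congr
    intro B _
    rw [and_iff_right_iff_imp]
    rintro ⟨i, hi⟩
    exact ⟨i, (Finset.mem_inter.1 hi).1⟩
  · congr 1
    rw [Finset.filter_filter]
    apply Finset.filter_congr
    intro B _
    simp only [and_congr_right_iff]
    intro _
    rw [Finset.not_nonempty_iff_eq_empty, Finset.eq_empty_iff_forall_notMem]
    simp only [Finset.mem_inter, Finset.mem_compl, Finset.subset_iff]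
    constructor
    · intro h i hi
      by_contra hc
      exact h i ⟨hi, hc⟩
    · rintro h i ⟨hi, hc⟩
      exact hc (h hi)

lemma mobius_zero_of_S {n : ℕ} (ψ : Finset (Fin n) → ℝ)
    (hS : ∀ A : Finset (Fin n), Sfun ψ A = 0) :
    ∀ C : Finset (Fin n), C.Nonempty → mobius ψ C = 0 := by
  have hT : ∀ C : Finset (Fin n), Tfun ψ C = 0 := by
    intro C
    have := S_split ψ C
    rw [hS, hS] at this
    linarith
  suffices h : ∀ m : ℕ, ∀ C : Finset (Fin n), C.card ≤ m → C.Nonempty → mobius ψ C = 0 by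
    intro C hC; exact h C.card C le_rfl hC
  intro m
  induction m with
  | zero =>
    intro C hC hCne
    exact absurd (Finset.card_eq_zero.1 (Nat.le_zero.1 hC)) (Finset.nonempty_iff_ne_empty.1 hCne)
  | succ m ih =>
    intro C hC hCne
    have hCin : C ∈ Finset.univ.filter (fun B : Finset (Fin n) => B.Nonempty ∧ B ⊆ C) := by
      simp [hCne]
    have hkey := Finset.add_sum_erase _ (mobius ψ) hCin
    have herase : ∑ B ∈ (Finset.univ.filter
        (fun B : Finset (Fin n) => B.Nonempty ∧ B ⊆ C)).erase C, mobius ψ B = 0 := by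
      apply Finset.sum_eq_zero
      intro B hB
      rw [Finset.mem_erase, Finset.mem_filter] at hB
      obtain ⟨hne, _, hBne, hBC⟩ := hB
      have hlt : B.card < C.card := Finset.card_lt_card (lt_of_le_of_ne hBC hne)
      exact ih B (by omega) hBne
    have := hT C
    unfold Tfun at this
    rw [← hkey, herase] at this
    linarith

lemma Lov_const {n : ℕ} (ψ : Finset (Fin n) → ℝ)
    (hm : ∀ B : Finset (Fin n), B.Nonempty → mobius ψ B = 0) (x : Fin n → ℝ) :
    Lov ψ x = mobius ψ ∅ := by
  unfold Lov
  have : ∑ A : Finset (Fin n), mobius ψ A * minOnFin A x = 0 := by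
    apply Finset.sum_eq_zero
    intro B _
    by_cases h : B.Nonempty
    · rw [hm B h, zero_mul]
    · unfold minOnFin; rw [dif_neg h, mul_zero]
  rw [this, add_zero]
/-- Weak homogeneity of `h : Iⁿ → ℝ` for `I ⊆ ℝ₋`: there exists a nondecreasing `χ : I → ℝ`
with `χ(0) = 0` such that `h(x·1_A) = −χ(x)·h(−1_A)` for every `x ∈ I`, `A ⊆ [n]`. -/
def WeaklyHomNeg {n : ℕ} (I : Set ℝ) (h : (Fin n → ℝ) → ℝ) : Prop :=
  ∃ χ : ℝ → ℝ, MonotoneOn χ I ∧ χ 0 = 0 ∧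
    ∀ x ∈ I, ∀ A : Finset (Fin n),
      h (fun i => x * ind A i) = -(χ x) * h (fun i => -(ind A i))

/-- For a nonconstant quasi-Lovász extension `f = L ∘ φ` on `Iⁿ`,
`[−1,0] ⊆ I ⊆ ℝ₋`: (i) `f_0` weakly homogeneous ↔ (ii) `f_0(−1_A) ≠ 0` for some `A`
↔ (iii) `φ(−1) ≠ 0`; and in this case `f_0(x·1_A) = (φ(x)/φ(−1))·f_0(−1_A)`. -/
theorem stmt6 {n : ℕ} (I : Set ℝ) (hI : I.OrdConnected)
    (hI1 : Set.Icc (-1 : ℝ) 0 ⊆ I) (hIneg : I ⊆ Set.Iic (0 : ℝ))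
    (f L : (Fin n → ℝ) → ℝ) (φ : ℝ → ℝ)
    (hL : ∃ ψ : Finset (Fin n) → ℝ, L = Lov ψ)
    (hφ : MonotoneOn φ I) (hφ0 : φ 0 = 0)
    (hf : ∀ x : Fin n → ℝ, (∀ i, x i ∈ I) → f x = L (fun i => φ (x i)))
    (hnc : ∃ x y : Fin n → ℝ, (∀ i, x i ∈ I) ∧ (∀ i, y i ∈ I) ∧ f x ≠ f y) :
    (WeaklyHomNeg I (fun y => f y - f (fun _ => 0)) ↔
       ∃ A : Finset (Fin n), f (fun i => -(ind A i)) - f (fun _ => 0) ≠ 0) ∧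
    ((∃ A : Finset (Fin n), f (fun i => -(ind A i)) - f (fun _ => 0) ≠ 0) ↔ φ (-1) ≠ 0) ∧
    (φ (-1) ≠ 0 → ∀ x ∈ I, ∀ A : Finset (Fin n),
      f (fun i => x * ind A i) - f (fun _ => 0) =
        (φ x / φ (-1)) * (f (fun i => -(ind A i)) - f (fun _ => 0))) := by
  obtain ⟨ψ, rfl⟩ := hL
  have h0I : (0:ℝ) ∈ I := hI1 ⟨by norm_num, le_refl 0⟩
  have hm1I : (-1:ℝ) ∈ I := hI1 ⟨le_refl _, by norm_num⟩
  have hφle : ∀ x ∈ I, φ x ≤ 0 := fun x hx => by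
    have := hφ hx h0I (hIneg hx)
    rwa [hφ0] at this
  have key : ∀ x ∈ I, ∀ A : Finset (Fin n),
      f (fun i => x * ind A i) - f (fun _ => 0) = φ x * Sfun ψ A := by
    intro x hx A
    have hmem : ∀ i, x * ind A i ∈ I := by
      intro i
      unfold ind
      split
      · rwa [mul_one]
      · rwa [mul_zero]
    rw [hf _ hmem, hf (fun _ => 0) (fun _ => h0I)]
    have hcomp : (fun i => φ (x * ind A i)) = fun i => φ x * ind A i := by
      funext i
      unfold ind
      split
      · rw [mul_one, mul_one]
      · rw [mul_zero, mul_zero, hφ0]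
    have hzero : (fun i : Fin n => φ ((fun _ => (0:ℝ)) i)) = fun _ => (0:ℝ) := by
      funext i; exact hφ0
    rw [hcomp, hzero]
    exact Lov_scaled ψ A (φ x) (hφle x hx)
  have keyneg : ∀ A : Finset (Fin n),
      f (fun i => -(ind A i)) - f (fun _ => 0) = φ (-1) * Sfun ψ A := by
    intro A
    have h1 : (fun i => -(ind A i)) = fun i => (-1:ℝ) * ind A i := by
      funext i; rw [neg_one_mul]
    rw [h1]
    exact key (-1) hm1I A
  have hSA : ∃ A : Finset (Fin n), Sfun ψ A ≠ 0 := by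
    by_contra hno
    push_neg at hno
    have hmz := mobius_zero_of_S ψ hno
    obtain ⟨x, y, hxI, hyI, hxy⟩ := hnc
    apply hxy
    rw [hf x hxI, hf y hyI, Lov_const ψ hmz, Lov_const ψ hmz]
  have h23 : (∃ A : Finset (Fin n), f (fun i => -(ind A i)) - f (fun _ => 0) ≠ 0) ↔
      φ (-1) ≠ 0 := by
    constructor
    · rintro ⟨A, hA⟩ h
      rw [keyneg A, h, zero_mul] at hA
      exact hA rfl
    · intro h
      obtain ⟨A, hA⟩ := hSA
      exact ⟨A, by rw [keyneg A]; exact mul_ne_zero h hA⟩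
  have h3 : φ (-1) ≠ 0 → ∀ x ∈ I, ∀ A : Finset (Fin n),
      f (fun i => x * ind A i) - f (fun _ => 0) =
        (φ x / φ (-1)) * (f (fun i => -(ind A i)) - f (fun _ => 0)) := by
    intro hφ1 x hx A
    rw [key x hx A, keyneg A]
    field_simp
  refine ⟨?_, h23, h3⟩
  constructor
  · rintro ⟨χ, hmono, hχ0, hEq⟩
    by_contra hno
    push_neg at hno
    have hall : ∀ x ∈ I, φ x = 0 := by
      intro x hx
      obtain ⟨A, hA⟩ := hSA
      have h2 : f (fun i => x * ind A i) - f (fun _ => 0) =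
          -(χ x) * (f (fun i => -(ind A i)) - f (fun _ => 0)) := hEq x hx A
      rw [hno A, mul_zero, key x hx A] at h2
      exact (mul_eq_zero.1 h2).resolve_right hA
    obtain ⟨x, y, hxI, hyI, hxy⟩ := hnc
    apply hxy
    rw [hf x hxI, hf y hyI]
    congr 1
    funext i
    rw [hall _ (hxI i), hall _ (hyI i)]
  · intro hii
    have hφ1 : φ (-1) ≠ 0 := h23.1 hii
    have hφ1lt : φ (-1) < 0 := lt_of_le_of_ne (hφle _ hm1I) hφ1
    refine ⟨fun t => -(φ t / φ (-1)), ?_, by simp [hφ0], ?_⟩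
    · intro a ha b hb hab
      have hle := hφ ha hb hab
      have hinv : (φ (-1))⁻¹ < 0 := inv_lt_zero.2 hφ1lt
      simp only [div_eq_mul_inv, neg_le_neg_iff]
      exact mul_le_mul_of_nonpos_right hle (le_of_lt hinv)
    · intro x hx A
      show f (fun i => x * ind A i) - f (fun _ => 0) =
        -(-(φ x / φ (-1))) * (f (fun i => -(ind A i)) - f (fun _ => 0))
      rw [key x hx A, keyneg A]
      field_simp
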